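/- For every nonnegative integer n, the degenerate exponential satisfies the multiplication-type identity e_λ^{mx}(t) coefficients: (mx)_{n,λ} = Σ_{k=0}^{n} C(n,k) (x)_{k,λ} (m-1)^{n-k} (x)_{n-k, λ/(m-1)} for integers m ≥ 2, which yields β_{n,λ}^{(p)}(mx) = Σ_{k=0}^{n} C(n,k) β_{k,λ}^{(p)}(x) (m-1)^{n-k} (x)_{n-k,λ/(m-1)}. -/

import Mathlib

open Finset PowerSeries

noncomputable section

/-- The generalized (degenerate) falling factorial `(x)_{n,λ} = ∏_{j<n} (x - jλ)`. -/
def dfall (x : ℝ) (n : ℕ) (lam : ℝ) : ℝ := ∏ j ∈ Finset.range n, (x - j * lam)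

/-- The degenerate exponential `e_λ^x(t) = Σ_{n≥0} (x)_{n,λ} t^n / n!` as a formal power series. -/
def degExp (lam x : ℝ) : PowerSeries ℝ :=
  PowerSeries.mk fun n => dfall x n lam / n.factorial

/-- The degenerate Stirling numbers of the second kind, defined by
`(1/k!)(e_λ(t)-1)^k = Σ_{n≥k} S_{2,λ}(n,k) t^n/n!`. -/
def S2 (lam : ℝ) (n k : ℕ) : ℝ :=
  (n.factorial : ℝ) / (k.factorial : ℝ) * PowerSeries.coeff n ((degExp lam 1 - 1) ^ k)

/-- The degenerate Stirling polynomials of the second kind, defined by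
`(1/k!)(e_λ(t)-1)^k e_λ^x(t) = Σ_{n≥k} S_{2,λ}(n,k|x) t^n/n!`. -/
def S2p (lam : ℝ) (n k : ℕ) (x : ℝ) : ℝ :=
  (n.factorial : ℝ) / (k.factorial : ℝ) *
    PowerSeries.coeff n ((degExp lam 1 - 1) ^ k * degExp lam x)

/-- The degenerate logarithm `log_λ(1+t) = Σ_{n≥1} λ^{n-1}(1)_{n,1/λ} t^n/n!`. -/
def degLog (lam : ℝ) : PowerSeries ℝ :=
  PowerSeries.mk fun n => if n = 0 then 0 else lam ^ (n - 1) * dfall 1 n (1 / lam) / n.factorial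

/-- The degenerate Stirling numbers of the first kind, defined by
`(1/k!)(log_λ(1+t))^k = Σ_{n≥k} S_{1,λ}(n,k) t^n/n!`. -/
def S1 (lam : ℝ) (n k : ℕ) : ℝ :=
  (n.factorial : ℝ) / (k.factorial : ℝ) * PowerSeries.coeff n ((degLog lam) ^ k)

/-- Rising factorial `⟨a⟩_k = a(a+1)⋯(a+k-1)`. -/
def rising (a : ℝ) (k : ℕ) : ℝ := ∏ j ∈ Finset.range k, (a + j)

/-- The generalized degenerate Bernoulli polynomials `β_{n,λ}^{(p)}(x)`, defined by
`Σ_{n≥0} β_{n,λ}^{(p)}(x) t^n/n! = ₂F₁(1-λ,1;p+2;1-e_λ(t)) e_λ^x(t)`.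
Since `1 - e_λ(t)` has zero constant term, the coefficient of `t^n` in the
hypergeometric series only involves the terms with `k ≤ n`. -/
def genBetaPoly (lam : ℝ) (p : ℤ) (x : ℝ) (n : ℕ) : ℝ :=
  (n.factorial : ℝ) * PowerSeries.coeff n
    ((∑ k ∈ Finset.range (n + 1),
        (rising (1 - lam) k * rising 1 k / (rising ((p : ℝ) + 2) k * k.factorial)) •
          ((1 - degExp lam 1) ^ k)) * degExp lam x)

/-- The generalized degenerate Bernoulli numbers `β_{n,λ}^{(p)} = β_{n,λ}^{(p)}(0)`. -/
def genBeta (lam : ℝ) (p : ℤ) (n : ℕ) : ℝ := genBetaPoly lam p 0 n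

/-- The degenerate type Eulerian numbers, defined by
`(-1)^{n-m} A_λ(n,m) = Σ_{k=0}^{n-m} λ^k (1)_{k+1,1/λ} C(n-k,m) S_{2,λ}(n,k)`. -/
def Eul (lam : ℝ) (n m : ℕ) : ℝ :=
  (-1 : ℝ) ^ (n - m) * ∑ k ∈ Finset.range (n - m + 1),
    lam ^ k * dfall 1 (k + 1) (1 / lam) * ((n - k).choose m : ℝ) * S2 lam n k


lemma dfall_succ (x lam : ℝ) (n : ℕ) : dfall x (n+1) lam = dfall x n lam * (x - n*lam) :=
  Finset.prod_range_succ _ _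

lemma dfall_vander (a b lam : ℝ) (n : ℕ) :
    dfall (a+b) n lam = ∑ k ∈ Finset.range (n+1),
      (n.choose k : ℝ) * dfall a k lam * dfall b (n-k) lam := by
  induction n with
  | zero => simp [dfall]
  | succ n ih =>
    rw [dfall_succ, ih, Finset.sum_mul]
    have step : ∀ k ∈ Finset.range (n+1),
        (n.choose k : ℝ) * dfall a k lam * dfall b (n-k) lam * (a + b - n*lam)
        = (n.choose k : ℝ) * (dfall a (k+1) lam * dfall b (n-k) lam)
          + (n.choose k : ℝ) * (dfall a k lam * dfall b (n-k+1) lam) := by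
      intro k hk
      rw [Finset.mem_range] at hk
      have hk' : k ≤ n := Nat.lt_succ_iff.mp hk
      have hcast : ((n-k : ℕ) : ℝ) = (n:ℝ) - k := by rw [Nat.cast_sub hk']
      rw [dfall_succ, dfall_succ, hcast]
      ring
    rw [Finset.sum_congr rfl step, Finset.sum_add_distrib]
    have e1 : ∑ k ∈ Finset.range (n+1), (n.choose k : ℝ) * (dfall a k lam * dfall b (n-k+1) lam)
        = (∑ k ∈ Finset.range n, (n.choose (k+1) : ℝ) * (dfall a (k+1) lam * dfall b (n-k) lam))
          + dfall b (n+1) lam := by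
      rw [Finset.sum_range_succ']
      congr 1
      · apply Finset.sum_congr rfl
        intro k hk
        rw [Finset.mem_range] at hk
        have : n - (k+1) + 1 = n - k := by omega
        rw [this]
      · simp [dfall]
    have e2 : ∑ k ∈ Finset.range (n+1), (n.choose (k+1) : ℝ) * (dfall a (k+1) lam * dfall b (n-k) lam)
        = ∑ k ∈ Finset.range n, (n.choose (k+1) : ℝ) * (dfall a (k+1) lam * dfall b (n-k) lam) := by
      rw [Finset.sum_range_succ]
      simp
    rw [e1]
    rw [Finset.sum_range_succ' (fun k => ((n+1).choose k : ℝ) * dfall a k lam * dfall b (n+1-k) lam) (n+1)]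
    have e3 : ∀ k ∈ Finset.range (n+1),
        ((n+1).choose (k+1) : ℝ) * dfall a (k+1) lam * dfall b (n+1-(k+1)) lam
        = (n.choose k : ℝ) * (dfall a (k+1) lam * dfall b (n-k) lam)
          + (n.choose (k+1) : ℝ) * (dfall a (k+1) lam * dfall b (n-k) lam) := by
      intro k _
      rw [Nat.choose_succ_succ]
      have : n+1-(k+1) = n-k := by omega
      rw [this]
      push_cast
      ring
    rw [Finset.sum_congr rfl e3, Finset.sum_add_distrib, e2]
    simp [dfall]
    ring

lemma dfall_smul (c x mu : ℝ) (n : ℕ) : dfall (c*x) n (c*mu) = c^n * dfall x n mu := by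
  unfold dfall
  rw [show c^n = ∏ _j ∈ Finset.range n, c by simp, ← Finset.prod_mul_distrib]
  exact Finset.prod_congr rfl fun j _ => by ring

lemma part1_aux (lam x : ℝ) (m : ℕ) (hm : 2 ≤ m) (n : ℕ) :
    dfall ((m:ℝ)*x) n lam = ∑ k ∈ Finset.range (n+1),
      (n.choose k:ℝ) * dfall x k lam * ((m:ℝ)-1)^(n-k) * dfall x (n-k) (lam/((m:ℝ)-1)) := by
  have hc : (m:ℝ) - 1 ≠ 0 := by
    have h2 : (2:ℝ) ≤ (m:ℝ) := by exact_mod_cast hm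
    linarith
  have h1 : (m:ℝ)*x = x + ((m:ℝ)-1)*x := by ring
  rw [h1, dfall_vander]
  refine Finset.sum_congr rfl fun k _ => ?_
  have h3 : (((m:ℝ)-1)) * (lam/((m:ℝ)-1)) = lam := by field_simp
  have h4 : dfall (((m:ℝ)-1)*x) (n-k) lam
      = ((m:ℝ)-1)^(n-k) * dfall x (n-k) (lam/((m:ℝ)-1)) := by
    conv_lhs => rw [← h3]
    exact dfall_smul _ _ _ _
  rw [h4]; ring

lemma degExp_mul_aux (lam x : ℝ) (m : ℕ) (hm : 2 ≤ m) :
    degExp lam ((m:ℝ)*x) = degExp lam x *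
      PowerSeries.mk (fun j => ((m:ℝ)-1)^j * dfall x j (lam/((m:ℝ)-1)) / j.factorial) := by
  ext n
  rw [PowerSeries.coeff_mul, Finset.Nat.sum_antidiagonal_eq_sum_range_succ_mk]
  simp only [degExp, PowerSeries.coeff_mk]
  rw [part1_aux lam x m hm n, Finset.sum_div]
  refine Finset.sum_congr rfl fun k hk => ?_
  rw [Finset.mem_range] at hk
  have hk' : k ≤ n := Nat.lt_succ_iff.mp hk
  rw [Nat.cast_choose ℝ hk']
  have h1 : (k.factorial : ℝ) ≠ 0 := Nat.cast_ne_zero.mpr k.factorial_ne_zero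
  have h2 : ((n-k).factorial : ℝ) ≠ 0 := Nat.cast_ne_zero.mpr (n-k).factorial_ne_zero
  have h3 : (n.factorial : ℝ) ≠ 0 := Nat.cast_ne_zero.mpr n.factorial_ne_zero
  field_simp

lemma vanish_aux (lam y : ℝ) (j k : ℕ) (h : k < j) :
    PowerSeries.coeff k ((1 - degExp lam 1)^j * degExp lam y) = 0 := by
  have hX : (PowerSeries.X : PowerSeries ℝ) ∣ (1 - degExp lam 1) := by
    rw [PowerSeries.X_dvd_iff]
    simp [degExp, dfall]
  have h2 : (PowerSeries.X : PowerSeries ℝ)^j ∣ (1 - degExp lam 1)^j * degExp lam y :=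
    Dvd.dvd.mul_right (pow_dvd_pow_of_dvd hX j) _
  exact (PowerSeries.X_pow_dvd_iff.mp h2) k h

theorem stmt19 (lam : ℝ) (p : ℤ) (hp : -1 ≤ p) (x : ℝ) (n : ℕ) (m : ℕ) (hm : 2 ≤ m) :
    dfall ((m : ℝ) * x) n lam =
      (∑ k ∈ Finset.range (n + 1),
        (n.choose k : ℝ) * dfall x k lam * ((m : ℝ) - 1) ^ (n - k) *
          dfall x (n - k) (lam / ((m : ℝ) - 1))) ∧
    genBetaPoly lam p ((m : ℝ) * x) n =
      ∑ k ∈ Finset.range (n + 1),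
        (n.choose k : ℝ) * genBetaPoly lam p x k * ((m : ℝ) - 1) ^ (n - k) *
          dfall x (n - k) (lam / ((m : ℝ) - 1)) := by
  have hc : (m:ℝ) - 1 ≠ 0 := by
    have h2 : (2:ℝ) ≤ (m:ℝ) := by exact_mod_cast hm
    linarith
  refine ⟨part1_aux lam x m hm n, ?_⟩
  set C : ℕ → ℝ := fun j =>
    rising (1 - lam) j * rising 1 j / (rising ((p : ℝ) + 2) j * j.factorial) with hC
  set F : ℕ → PowerSeries ℝ := fun N =>
    ∑ j ∈ Finset.range (N+1), C j • ((1 - degExp lam 1)^j) with hF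
  have hgb : ∀ (y : ℝ) (N : ℕ),
      genBetaPoly lam p y N = N.factorial * PowerSeries.coeff N (F N * degExp lam y) := by
    intro y N
    rfl
  have hstable : ∀ k, k ≤ n →
      PowerSeries.coeff k (F n * degExp lam x) = genBetaPoly lam p x k / k.factorial := by
    intro k hk
    have hsplit : F n = F k + ∑ j ∈ Finset.Ico (k+1) (n+1), C j • ((1 - degExp lam 1)^j) := by
      rw [hF]
      simp only [Finset.range_eq_Ico]
      rw [← Finset.sum_Ico_consecutive _ (Nat.zero_le (k+1)) (by omega : k+1 ≤ n+1)]
    have hzero : PowerSeries.coeff k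
        ((∑ j ∈ Finset.Ico (k+1) (n+1), C j • ((1 - degExp lam 1)^j)) * degExp lam x) = 0 := by
      rw [Finset.sum_mul, map_sum]
      apply Finset.sum_eq_zero
      intro j hj
      rw [Finset.mem_Ico] at hj
      rw [smul_mul_assoc, map_smul, vanish_aux lam x j k (by omega), smul_zero]
    have hkf : (k.factorial : ℝ) ≠ 0 := Nat.cast_ne_zero.mpr k.factorial_ne_zero
    rw [hsplit, add_mul, map_add, hzero, add_zero, hgb x k]
    field_simp
  have hmain : genBetaPoly lam p ((m:ℝ)*x) n
      = n.factorial * PowerSeries.coeff n (F n * degExp lam ((m:ℝ)*x)) := hgb _ n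
  rw [hmain, degExp_mul_aux lam x m hm, ← mul_assoc, PowerSeries.coeff_mul,
    Finset.Nat.sum_antidiagonal_eq_sum_range_succ_mk, Finset.mul_sum]
  refine Finset.sum_congr rfl fun k hk => ?_
  rw [Finset.mem_range] at hk
  have hk' : k ≤ n := Nat.lt_succ_iff.mp hk
  rw [hstable k hk', PowerSeries.coeff_mk, Nat.cast_choose ℝ hk']
  have h1 : (k.factorial : ℝ) ≠ 0 := Nat.cast_ne_zero.mpr k.factorial_ne_zero
  have h2 : ((n-k).factorial : ℝ) ≠ 0 := Nat.cast_ne_zero.mpr (n-k).factorial_ne_zero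
  field_simp
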